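/- The operator Y shifts the parameter α of U_n by one: for every integer n with 0 ≤ n ≤ N and every integer x, A₁(x) U_n(x+1;α,β,N) + A₂(x) U_n(x−1;α,β,N) + A₀(x) U_n(x;α,β,N) = α n (n + β − N) · U_n(x;α+1,β,N). -/

import Mathlib

/-- Pochhammer symbol `(a)_k = a (a+1) ⋯ (a+k-1)`, with `(a)_0 = 1`. -/
noncomputable def poch (a : ℝ) (k : ℕ) : ℝ := ∏ i ∈ Finset.range k, (a + (i : ℝ))

/-- Coefficients of the difference operator `Y`. -/
noncomputable def A1 (α β : ℝ) (N : ℕ) (x : ℝ) : ℝ := (x - α) * (x - (N : ℝ)) * (x + 1 - α)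
noncomputable def A2 (α β : ℝ) (N : ℕ) (x : ℝ) : ℝ := x * (x - α) * (x + β - α - (N : ℝ))
noncomputable def A0 (α β : ℝ) (N : ℕ) (x : ℝ) : ℝ :=
  (x - α) * (-2 * x ^ 2 + (2 * α - 1 + 2 * (N : ℝ) - β) * x - (N : ℝ) * (α - 1))

/-- The rational function of Hahn type `U_n(x;α,β,N)`. -/
noncomputable def U (α β : ℝ) (N n : ℕ) (x : ℤ) : ℝ :=
  ((-1 : ℝ) ^ n * poch (-(N : ℝ)) n / poch (β + 1) n) *
    ∑ k ∈ Finset.range (n + 1),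
      poch (-(x : ℝ)) k * poch (-(n : ℝ)) k * poch (β + (n : ℝ) - (N : ℝ)) k /
        ((Nat.factorial k : ℝ) * poch (-(N : ℝ)) k * poch (α - (x : ℝ)) k)

lemma poch_zero (a : ℝ) : poch a 0 = 1 := Finset.prod_range_zero _

lemma poch_succ (a : ℝ) (m : ℕ) : poch a (m+1) = poch a m * (a + m) :=
  Finset.prod_range_succ _ _

lemma poch_succ' (a : ℝ) (m : ℕ) : poch a (m+1) = a * poch (a+1) m := by
  rw [poch, Finset.prod_range_succ', poch]
  simp only [Nat.cast_add, Nat.cast_one, Nat.cast_zero, add_zero]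
  rw [mul_comm]
  congr 1
  exact Finset.prod_congr rfl (fun i _ => by ring)

lemma poch_ne (a : ℝ) (k : ℕ) (h : ∀ i : ℕ, i < k → a + i ≠ 0) : poch a k ≠ 0 :=
  Finset.prod_ne_zero_iff.2 (fun i hi => h i (Finset.mem_range.1 hi))

lemma poch_int_ne (α : ℝ) (hα : ∀ m : ℤ, α ≠ (m : ℝ)) (z : ℤ) (k : ℕ) :
    poch (α + (z : ℝ)) k ≠ 0 := by
  refine poch_ne _ _ (fun i _ h => ?_)
  exact hα (-z - i) (by push_cast; linarith)

lemma pochN_ne (N k : ℕ) (h : k ≤ N) : poch (-(N : ℝ)) k ≠ 0 := by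
  refine poch_ne _ _ (fun i hi h0 => ?_)
  have : (i : ℝ) < (N : ℝ) := by exact_mod_cast lt_of_lt_of_le hi h
  linarith

/-- the summand of `U`. -/
noncomputable def T (α β : ℝ) (N n : ℕ) (x : ℤ) (k : ℕ) : ℝ :=
  poch (-(x : ℝ)) k * poch (-(n : ℝ)) k * poch (β + (n : ℝ) - (N : ℝ)) k /
    ((Nat.factorial k : ℝ) * poch (-(N : ℝ)) k * poch (α - (x : ℝ)) k)

set_option maxRecDepth 100000 in
lemma step (α β : ℝ) (N : ℕ) (m : ℕ) (x : ℝ)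
    (h1 : α - x - 1 ≠ 0) (h2 : α - x ≠ 0) (h3 : α + 1 - x + (m : ℝ) ≠ 0)
    (hq0 : poch (α + 1 - x) m ≠ 0) (hq1 : poch (α - x) m ≠ 0) :
    A1 α β N x * (poch (-(x+1)) (m+1) / poch (α - (x+1)) (m+1))
      + A2 α β N x * (poch (-(x-1)) (m+1) / poch (α - (x-1)) (m+1))
      + A0 α β N x * (poch (-x) (m+1) / poch (α - x) (m+1))
    = α * ((m : ℝ)+1) * (((m : ℝ)+1) + β - (N : ℝ)) * (poch (-x) (m+1) / poch (α + 1 - x) (m+1))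
      + α * ((m : ℝ)+1) * ((N : ℝ) - (m : ℝ)) * (poch (-x) m / poch (α + 1 - x) m) := by
  have e1 : poch (-(x+1)) (m+1) = (-(x+1)) * poch (-x) m := by
    rw [poch_succ', show -(x+1)+1 = -x from by ring]
  have e2 : poch (α - (x+1)) (m+1) = (α - x - 1) * poch (α - x) m := by
    rw [poch_succ', show α - (x+1) = α - x - 1 from by ring, show α - x - 1 + 1 = α - x from by ring]
  have e3 : poch (-(x-1)) (m+1) = poch (1-x) m * (1 - x + m) := by
    rw [show -(x-1) = 1 - x from by ring, poch_succ]
  have e4 : poch (α - (x-1)) (m+1) = poch (α + 1 - x) m * (α + 1 - x + m) := by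
    rw [show α - (x-1) = α + 1 - x from by ring, poch_succ]
  have e5 : poch (-x) (m+1) = (-x) * poch (1-x) m := by
    rw [poch_succ', show -x + 1 = 1 - x from by ring]
  have e6 : poch (α - x) (m+1) = (α - x) * poch (α + 1 - x) m := by
    rw [poch_succ', show α - x + 1 = α + 1 - x from by ring]
  have e7 : poch (α + 1 - x) (m+1) = poch (α + 1 - x) m * (α + 1 - x + m) := poch_succ _ _
  have hR1 : (-x) * poch (1-x) m = poch (-x) m * (-x + m) := by
    have a := poch_succ' (-x) m
    rw [show -x + 1 = 1 - x from by ring] at a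
    exact a.symm.trans (poch_succ (-x) m)
  have hR2 : (α - x) * poch (α + 1 - x) m = poch (α - x) m * (α - x + m) := by
    have a := poch_succ' (α - x) m
    rw [show α - x + 1 = α + 1 - x from by ring] at a
    exact a.symm.trans (poch_succ (α - x) m)
  rw [e1, e2, e3, e4, e5, e6, e7]
  set P0 := poch (1-x) m with hP0
  set P1 := poch (-x) m with hP1
  set Q0 := poch (α + 1 - x) m with hQ0
  set Q1 := poch (α - x) m with hQ1
  have hm : α - x + (m:ℝ) ≠ 0 := by
    intro h0
    rw [h0, mul_zero] at hR2
    exact mul_ne_zero h2 hq0 hR2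
  have hQ1' : Q1 = (α - x) * Q0 / (α - x + (m:ℝ)) := by
    rw [eq_div_iff hm]; exact hR2.symm
  have hxP0 : x * P0 = (x - (m:ℝ)) * P1 := by linear_combination -hR1
  have key : A1 α β N x * (-(x+1) * P1 / ((α - x - 1) * Q1))
        + A2 α β N x * (P0 * (1 - x + (m:ℝ)) / (Q0 * (α + 1 - x + (m:ℝ))))
        + A0 α β N x * (-x * P0 / ((α - x) * Q0))
        - (α * ((m : ℝ)+1) * (((m : ℝ)+1) + β - (N : ℝ)) * (-x * P0 / (Q0 * (α + 1 - x + (m:ℝ))))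
        + α * ((m : ℝ)+1) * ((N : ℝ) - (m : ℝ)) * (P1 / Q0))
      = (-(x-(N:ℝ))*(x+1)*(α-x+(m:ℝ))*(α+1-x+(m:ℝ))*P1 - (α-x)*(β-(N:ℝ)-(α-x))*(1-x+(m:ℝ))*(x*P0) + (-2*x^2+(2*α-1+2*(N:ℝ)-β)*x-(N:ℝ)*(α-1))*(α+1-x+(m:ℝ))*(x*P0) + α*((m:ℝ)+1)*((m:ℝ)+1+β-(N:ℝ))*(x*P0) - α*((m:ℝ)+1)*((N:ℝ)-(m:ℝ))*(α+1-x+(m:ℝ))*P1) / (Q0 * (α + 1 - x + (m:ℝ))) := by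
    rw [hQ1']
    unfold A0 A1 A2
    field_simp
    ring
  have hN : (-(x-(N:ℝ))*(x+1)*(α-x+(m:ℝ))*(α+1-x+(m:ℝ))*P1 - (α-x)*(β-(N:ℝ)-(α-x))*(1-x+(m:ℝ))*(x*P0) + (-2*x^2+(2*α-1+2*(N:ℝ)-β)*x-(N:ℝ)*(α-1))*(α+1-x+(m:ℝ))*(x*P0) + α*((m:ℝ)+1)*((m:ℝ)+1+β-(N:ℝ))*(x*P0) - α*((m:ℝ)+1)*((N:ℝ)-(m:ℝ))*(α+1-x+(m:ℝ))*P1) = 0 := by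
    rw [hxP0]
    ring
  linear_combination key + hN / (Q0 * (α + 1 - x + (m:ℝ)))

set_option maxHeartbeats 1600000 in
lemma sumkey (N : ℕ) (α β : ℝ) (hα : ∀ m : ℤ, α ≠ (m : ℝ)) (n : ℕ) (hn : n ≤ N) (x : ℤ) :
    A1 α β N (x : ℝ) * ∑ k ∈ Finset.range (n+1), T α β N n (x+1) k
      + A2 α β N (x : ℝ) * ∑ k ∈ Finset.range (n+1), T α β N n (x-1) k
      + A0 α β N (x : ℝ) * ∑ k ∈ Finset.range (n+1), T α β N n x k
    = α * (n : ℝ) * ((n : ℝ) + β - (N : ℝ)) * ∑ k ∈ Finset.range (n+1), T (α+1) β N n x k := by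
  have h1 : α - (x : ℝ) - 1 ≠ 0 := fun h => hα (x+1) (by push_cast; linarith)
  have h2 : α - (x : ℝ) ≠ 0 := fun h => hα x (by push_cast; linarith)
  have h3 : ∀ m : ℕ, α + 1 - (x : ℝ) + (m : ℝ) ≠ 0 := fun m h =>
    hα (x - 1 - m) (by push_cast; linarith)
  have hq1 : ∀ m : ℕ, poch (α - (x : ℝ)) m ≠ 0 := fun m => by
    have := poch_int_ne α hα (-x) m
    rwa [show α + ((-x : ℤ) : ℝ) = α - (x : ℝ) from by push_cast; ring] at this
  have hq0 : ∀ m : ℕ, poch (α + 1 - (x : ℝ)) m ≠ 0 := fun m => by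
    have := poch_int_ne α hα (1 - x) m
    rwa [show α + ((1 - x : ℤ) : ℝ) = α + 1 - (x : ℝ) from by push_cast; ring] at this
  set HH : ℕ → ℝ := fun k =>
    α * (k : ℝ) * ((N : ℝ) + 1 - (k : ℝ)) *
      (poch (-(n : ℝ)) k * poch (β + (n : ℝ) - (N : ℝ)) k /
        ((Nat.factorial k : ℝ) * poch (-(N : ℝ)) k)) *
      (poch (-(x : ℝ)) (k-1) / poch (α + 1 - (x : ℝ)) (k-1)) with hHH
  rw [Finset.mul_sum, Finset.mul_sum, Finset.mul_sum, ← Finset.sum_add_distrib,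
    ← Finset.sum_add_distrib]
  have hstep : ∀ k ∈ Finset.range (n+1),
      A1 α β N (x : ℝ) * T α β N n (x+1) k + A2 α β N (x : ℝ) * T α β N n (x-1) k
        + A0 α β N (x : ℝ) * T α β N n x k
      = α * (k : ℝ) * ((k : ℝ) + β - (N : ℝ)) * T (α+1) β N n x k + HH k := by
    intro k _
    match k with
    | 0 =>
      simp only [T, hHH, poch_zero, Nat.factorial_zero, Nat.cast_zero, Nat.zero_sub,
        Nat.cast_one]
      unfold A0 A1 A2
      ring
    | (m+1) =>
      simp only [T, hHH, Nat.add_sub_cancel]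
      push_cast
      have st := step α β N m (x : ℝ) h1 h2 (h3 m) (hq0 m) (hq1 m)
      linear_combination (poch (-(n : ℝ)) (m+1) * poch (β + (n : ℝ) - (N : ℝ)) (m+1) /
        ((Nat.factorial (m+1) : ℝ) * poch (-(N : ℝ)) (m+1))) * st
  rw [Finset.sum_congr rfl hstep, Finset.sum_add_distrib, Finset.sum_range_succ' HH n]
  have hHH0 : HH 0 = 0 := by simp [hHH]
  have hshift : ∀ j ∈ Finset.range n, HH (j+1)
      = α * ((n : ℝ) - (j : ℝ)) * (β + (n : ℝ) - (N : ℝ) + (j : ℝ)) * T (α+1) β N n x j := by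
    intro j hj
    have hjn : j < n := Finset.mem_range.1 hj
    have hjN : (j : ℝ) - (N : ℝ) ≠ 0 := by
      have : (j : ℝ) < (N : ℝ) := by exact_mod_cast lt_of_lt_of_le hjn hn
      intro h; linarith
    have hNmj : -(N : ℝ) + (j : ℝ) ≠ 0 := by intro h; apply hjN; linarith
    have hfac : ((Nat.factorial j : ℕ) : ℝ) ≠ 0 := Nat.cast_ne_zero.2 (Nat.factorial_ne_zero j)
    have hj1 : ((j : ℝ) + 1) ≠ 0 := by positivity
    have hpN : poch (-(N : ℝ)) j ≠ 0 := pochN_ne N j (le_of_lt (lt_of_lt_of_le hjn hn))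
    simp only [T, hHH, Nat.add_sub_cancel]
    rw [poch_succ (-(n : ℝ)) j, poch_succ (β + (n : ℝ) - (N : ℝ)) j, poch_succ (-(N : ℝ)) j,
      Nat.factorial_succ]
    push_cast
    simp only [div_eq_mul_inv, mul_inv]
    have hc1 : ((j:ℝ)+1) * ((j:ℝ)+1)⁻¹ = 1 := mul_inv_cancel₀ hj1
    have hc2 : (-(N:ℝ)+(j:ℝ)) * (-(N:ℝ)+(j:ℝ))⁻¹ = 1 := mul_inv_cancel₀ hNmj
    linear_combination (-α * (β+(n:ℝ)-(N:ℝ)+(j:ℝ)) * ((j:ℝ)-(n:ℝ)) * (poch (-(n:ℝ)) j * poch (β+(n:ℝ)-(N:ℝ)) j * poch (-(x:ℝ)) j * ((Nat.factorial j : ℝ))⁻¹ * (poch (-(N:ℝ)) j)⁻¹ * (poch (α+1-(x:ℝ)) j)⁻¹)) * ((-(N:ℝ)+(j:ℝ)) * (-(N:ℝ)+(j:ℝ))⁻¹) * hc1 + (-α * (β+(n:ℝ)-(N:ℝ)+(j:ℝ)) * ((j:ℝ)-(n:ℝ)) * (poch (-(n:ℝ)) j * poch (β+(n:ℝ)-(N:ℝ))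 j * poch (-(x:ℝ)) j * ((Nat.factorial j : ℝ))⁻¹ * (poch (-(N:ℝ)) j)⁻¹ * (poch (α+1-(x:ℝ)) j)⁻¹)) * hc2
  rw [hHH0, add_zero, Finset.sum_congr rfl hshift]
  rw [Finset.sum_range_succ (fun k => α * (k : ℝ) * ((k : ℝ) + β - (N : ℝ)) * T (α+1) β N n x k) n,
    Finset.mul_sum,
    Finset.sum_range_succ (fun k => α * (n : ℝ) * ((n : ℝ) + β - (N : ℝ)) * T (α+1) β N n x k) n]
  have hcomb : ∑ j ∈ Finset.range n,
      (α * (j : ℝ) * ((j : ℝ) + β - (N : ℝ)) * T (α+1) β N n x j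
        + α * ((n : ℝ) - (j : ℝ)) * (β + (n : ℝ) - (N : ℝ) + (j : ℝ)) * T (α+1) β N n x j)
      = ∑ j ∈ Finset.range n, α * (n : ℝ) * ((n : ℝ) + β - (N : ℝ)) * T (α+1) β N n x j :=
    Finset.sum_congr rfl (fun j _ => by ring)
  have hdist := Finset.sum_add_distrib
    (s := Finset.range n)
    (f := fun j => α * (j : ℝ) * ((j : ℝ) + β - (N : ℝ)) * T (α+1) β N n x j)
    (g := fun j => α * ((n : ℝ) - (j : ℝ)) * (β + (n : ℝ) - (N : ℝ) + (j : ℝ)) * T (α+1) β N n x j)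
  linear_combination hcomb - hdist

theorem statement7 (N : ℕ) (hN : 0 < N) (α β : ℝ)
    (hα : ∀ m : ℤ, α ≠ (m : ℝ)) (hβ : ∀ m : ℤ, β ≠ (m : ℝ))
    (n : ℕ) (hn : n ≤ N) (x : ℤ) :
    A1 α β N (x : ℝ) * U α β N n (x + 1) + A2 α β N (x : ℝ) * U α β N n (x - 1)
      + A0 α β N (x : ℝ) * U α β N n x =
    α * (n : ℝ) * ((n : ℝ) + β - (N : ℝ)) * U (α + 1) β N n x := by
  have hU : ∀ (α' : ℝ) (y : ℤ), U α' β N n y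
      = ((-1 : ℝ) ^ n * poch (-(N : ℝ)) n / poch (β + 1) n) *
        ∑ k ∈ Finset.range (n+1), T α' β N n y k := fun _ _ => rfl
  rw [hU, hU, hU, hU]
  linear_combination ((-1 : ℝ) ^ n * poch (-(N : ℝ)) n / poch (β + 1) n) *
    sumkey N α β hα n hn x
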